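/- Suppose there exist constants M > 0 and K > 0 such that 0 ≤ c(z,a) ≤ M for all z ∈ Z, a ∈ {0,1}, and 0 ≤ w2(z) ≤ K for all z ∈ Z. Then for every λ ∈ ℝ the second derivative of the dual function satisfies β ≤ d″(λ) ≤ β + M²K²/β; in particular, d is β-strongly convex and its derivative d′ is Lipschitz continuous with constant β + M²K²/β. -/

import Mathlib

open Finset

/-- `q_λ(z,a) = w1(z) r(z,a) − λ w2(z) c(z,a)`. -/
noncomputable def qfun {Z : Type*} (r c : Z → Bool → ℝ) (w1 w2 : Z → ℝ)
    (lam : ℝ) (z : Z) (a : Bool) : ℝ :=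
  w1 z * r z a - lam * (w2 z * c z a)

/-- Partition function `Q(z,λ) = ∑_a exp(q_λ(z,a)/β)`. -/
noncomputable def Qpart {Z : Type*} (r c : Z → Bool → ℝ) (w1 w2 : Z → ℝ)
    (β lam : ℝ) (z : Z) : ℝ :=
  ∑ a, Real.exp (qfun r c w1 w2 lam z a / β)

/-- The dual function `d(λ) = β ∑_z ρ(z) log Q(z,λ) + λ C + (β/2) λ²`. -/
noncomputable def dualFun {Z : Type*} [Fintype Z] (ρ : Z → ℝ)
    (r c : Z → Bool → ℝ) (w1 w2 : Z → ℝ) (β C lam : ℝ) : ℝ :=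
  β * ∑ z, ρ z * Real.log (Qpart r c w1 w2 β lam z) + lam * C + β * lam ^ 2 / 2

noncomputable def Q1 {Z : Type*} (r c : Z → Bool → ℝ) (w1 w2 : Z → ℝ)
    (β lam : ℝ) (z : Z) : ℝ :=
  ∑ a, (-(w2 z * c z a) / β) * Real.exp (qfun r c w1 w2 lam z a / β)

noncomputable def Q2 {Z : Type*} (r c : Z → Bool → ℝ) (w1 w2 : Z → ℝ)
    (β lam : ℝ) (z : Z) : ℝ :=
  ∑ a, ((w2 z * c z a) / β) ^ 2 * Real.exp (qfun r c w1 w2 lam z a / β)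

lemma hasDerivAt_expq {Z : Type*} (r c : Z → Bool → ℝ) (w1 w2 : Z → ℝ)
    (β : ℝ) (lam : ℝ) (z : Z) (a : Bool) :
    HasDerivAt (fun l => Real.exp (qfun r c w1 w2 l z a / β))
      ((-(w2 z * c z a) / β) * Real.exp (qfun r c w1 w2 lam z a / β)) lam := by
  have h1 : HasDerivAt (fun l : ℝ => qfun r c w1 w2 l z a / β) (-(w2 z * c z a) / β) lam := by
    have : HasDerivAt (fun l : ℝ => (w1 z * r z a - l * (w2 z * c z a)) / β)
        (-(1 * (w2 z * c z a)) / β) lam :=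
      (((hasDerivAt_id lam).mul_const (w2 z * c z a)).const_sub (w1 z * r z a)).div_const β
    simpa [qfun] using this
  simpa [mul_comm] using h1.exp

lemma Qpart_pos {Z : Type*} (r c : Z → Bool → ℝ) (w1 w2 : Z → ℝ)
    (β lam : ℝ) (z : Z) : 0 < Qpart r c w1 w2 β lam z := by
  rw [Qpart, Fintype.sum_bool]
  positivity

lemma hasDerivAt_Qpart {Z : Type*} (r c : Z → Bool → ℝ) (w1 w2 : Z → ℝ)
    (β lam : ℝ) (z : Z) :
    HasDerivAt (fun l => Qpart r c w1 w2 β l z) (Q1 r c w1 w2 β lam z) lam := by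
  unfold Qpart Q1
  exact HasDerivAt.fun_sum fun a _ => hasDerivAt_expq r c w1 w2 β lam z a

lemma hasDerivAt_Q1 {Z : Type*} (r c : Z → Bool → ℝ) (w1 w2 : Z → ℝ)
    (β lam : ℝ) (z : Z) :
    HasDerivAt (fun l => Q1 r c w1 w2 β l z) (Q2 r c w1 w2 β lam z) lam := by
  unfold Q1 Q2
  refine HasDerivAt.fun_sum fun a _ => ?_
  have := (hasDerivAt_expq r c w1 w2 β lam z a).const_mul (-(w2 z * c z a) / β)
  refine this.congr_deriv ?_
  ring

noncomputable def D1 {Z : Type*} [Fintype Z] (ρ : Z → ℝ) (r c : Z → Bool → ℝ)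
    (w1 w2 : Z → ℝ) (β C lam : ℝ) : ℝ :=
  β * ∑ z, ρ z * (Q1 r c w1 w2 β lam z / Qpart r c w1 w2 β lam z) + C + β * lam

noncomputable def D2 {Z : Type*} [Fintype Z] (ρ : Z → ℝ) (r c : Z → Bool → ℝ)
    (w1 w2 : Z → ℝ) (β lam : ℝ) : ℝ :=
  β * ∑ z, ρ z * ((Q2 r c w1 w2 β lam z * Qpart r c w1 w2 β lam z
      - (Q1 r c w1 w2 β lam z) ^ 2) / (Qpart r c w1 w2 β lam z) ^ 2) + β

lemma hasDerivAt_dual {Z : Type*} [Fintype Z] (ρ : Z → ℝ) (r c : Z → Bool → ℝ)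
    (w1 w2 : Z → ℝ) (β C lam : ℝ) :
    HasDerivAt (fun l => dualFun ρ r c w1 w2 β C l) (D1 ρ r c w1 w2 β C lam) lam := by
  unfold dualFun D1
  have hsum : HasDerivAt (fun l => ∑ z, ρ z * Real.log (Qpart r c w1 w2 β l z))
      (∑ z, ρ z * (Q1 r c w1 w2 β lam z / Qpart r c w1 w2 β lam z)) lam := by
    refine HasDerivAt.fun_sum fun z _ => ?_
    exact (((hasDerivAt_Qpart r c w1 w2 β lam z).log
      (Qpart_pos r c w1 w2 β lam z).ne').const_mul (ρ z))
  have h2 : HasDerivAt (fun l : ℝ => l * C) C lam := hasDerivAt_mul_const C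
  have h3 : HasDerivAt (fun l : ℝ => β * l ^ 2 / 2) (β * lam) lam := by
    have := ((hasDerivAt_pow 2 lam).const_mul β).div_const 2
    refine this.congr_deriv ?_
    ring
  exact ((hsum.const_mul β).add h2).add h3

lemma hasDerivAt_D1 {Z : Type*} [Fintype Z] (ρ : Z → ℝ) (r c : Z → Bool → ℝ)
    (w1 w2 : Z → ℝ) (β C lam : ℝ) :
    HasDerivAt (fun l => D1 ρ r c w1 w2 β C l) (D2 ρ r c w1 w2 β lam) lam := by
  unfold D1 D2
  have hsum : HasDerivAt (fun l => ∑ z, ρ z * (Q1 r c w1 w2 β l z / Qpart r c w1 w2 β l z))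
      (∑ z, ρ z * ((Q2 r c w1 w2 β lam z * Qpart r c w1 w2 β lam z
        - (Q1 r c w1 w2 β lam z) ^ 2) / (Qpart r c w1 w2 β lam z) ^ 2)) lam := by
    refine HasDerivAt.fun_sum fun z _ => ?_
    have := ((hasDerivAt_Q1 r c w1 w2 β lam z).div (hasDerivAt_Qpart r c w1 w2 β lam z)
      (Qpart_pos r c w1 w2 β lam z).ne').const_mul (ρ z)
    refine this.congr_deriv ?_
    ring
  have h2 : HasDerivAt (fun l : ℝ => β * l) β lam := by
    simpa using (hasDerivAt_id lam).const_mul β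
  exact ((hsum.const_mul β).add_const C).add h2

lemma ratio_bounds {Z : Type*} (r c : Z → Bool → ℝ) (w1 w2 : Z → ℝ)
    (β lam : ℝ) (hβ : 0 < β) (z : Z) (M K : ℝ)
    (hv : ∀ a, 0 ≤ w2 z * c z a ∧ w2 z * c z a ≤ M * K) :
    0 ≤ (Q2 r c w1 w2 β lam z * Qpart r c w1 w2 β lam z - (Q1 r c w1 w2 β lam z) ^ 2)
        / (Qpart r c w1 w2 β lam z) ^ 2 ∧
    (Q2 r c w1 w2 β lam z * Qpart r c w1 w2 β lam z - (Q1 r c w1 w2 β lam z) ^ 2)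
        / (Qpart r c w1 w2 β lam z) ^ 2 ≤ (M * K / β) ^ 2 := by
  have hQ : 0 < Qpart r c w1 w2 β lam z := Qpart_pos r c w1 w2 β lam z
  set e0 := Real.exp (qfun r c w1 w2 lam z true / β) with he0
  set e1 := Real.exp (qfun r c w1 w2 lam z false / β) with he1
  have he0p : 0 < e0 := Real.exp_pos _
  have he1p : 0 < e1 := Real.exp_pos _
  have hQe : Qpart r c w1 w2 β lam z = e0 + e1 := by rw [Qpart, Fintype.sum_bool]
  have hQ1 : Q1 r c w1 w2 β lam z =
      (-(w2 z * c z true) / β) * e0 + (-(w2 z * c z false) / β) * e1 := by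
    rw [Q1, Fintype.sum_bool]
  have hQ2 : Q2 r c w1 w2 β lam z =
      ((w2 z * c z true) / β) ^ 2 * e0 + ((w2 z * c z false) / β) ^ 2 * e1 := by
    rw [Q2, Fintype.sum_bool]
  set b0 := w2 z * c z true
  set b1 := w2 z * c z false
  obtain ⟨hb00, hb0M⟩ := hv true
  obtain ⟨hb10, hb1M⟩ := hv false
  have hnum : Q2 r c w1 w2 β lam z * Qpart r c w1 w2 β lam z - (Q1 r c w1 w2 β lam z) ^ 2
      = e0 * e1 * ((b0 - b1) / β) ^ 2 := by
    rw [hQ1, hQ2, hQe]; field_simp; ring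
  have hQ2pos : (0:ℝ) < (Qpart r c w1 w2 β lam z) ^ 2 := by positivity
  constructor
  · apply div_nonneg _ (le_of_lt hQ2pos)
    rw [hnum]; positivity
  · rw [div_le_iff₀ hQ2pos, hnum, hQe]
    have hb00' : (0:ℝ) ≤ b0 := hb00
    have hb0M' : b0 ≤ M * K := hb0M
    have hb10' : (0:ℝ) ≤ b1 := hb10
    have hb1M' : b1 ≤ M * K := hb1M
    have hdiff : ((b0 - b1) / β) ^ 2 ≤ (M * K / β) ^ 2 := by
      rw [div_pow, div_pow]
      have h : (b0 - b1) ^ 2 ≤ (M * K) ^ 2 := by nlinarith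
      have hβ2 : (0:ℝ) < β ^ 2 := by positivity
      exact div_le_div_of_nonneg_right h hβ2.le
    nlinarith [mul_pos he0p he1p, sq_nonneg (e0 - e1), sq_nonneg (e0 + e1),
      mul_nonneg (le_of_lt (mul_pos he0p he1p)) (sq_nonneg ((b0-b1)/β)),
      sq_nonneg (M*K/β), mul_pos (mul_pos he0p he1p) (by positivity : (0:ℝ) < 1)]

/-- under the bounds `0 ≤ c ≤ M` and `0 ≤ w2 ≤ K`, the second
derivative of the dual function satisfies `β ≤ d″(λ) ≤ β + M²K²/β` for every
`λ`; in particular `d` is `β`-strongly convex and `d′` is Lipschitz with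
constant `β + M²K²/β`. -/
theorem dual_strong_convexity_and_smoothness {Z : Type*} [Fintype Z] [Nonempty Z]
    (ρ : Z → ℝ) (hρ_pos : ∀ z, 0 < ρ z) (hρ_sum : ∑ z, ρ z = 1)
    (r c : Z → Bool → ℝ) (w1 w2 : Z → ℝ)
    (hw1 : ∀ z, 0 ≤ w1 z) (hw2 : ∀ z, 0 ≤ w2 z)
    (β : ℝ) (hβ : 0 < β) (C : ℝ)
    (M K : ℝ) (hM : 0 < M) (hK : 0 < K)
    (hc_bound : ∀ z a, 0 ≤ c z a ∧ c z a ≤ M)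
    (hw2_bound : ∀ z, w2 z ≤ K) :
    (∀ lam : ℝ,
      β ≤ deriv (deriv (fun l => dualFun ρ r c w1 w2 β C l)) lam ∧
      deriv (deriv (fun l => dualFun ρ r c w1 w2 β C l)) lam ≤ β + M ^ 2 * K ^ 2 / β) ∧
    StrongConvexOn Set.univ β (fun l => dualFun ρ r c w1 w2 β C l) ∧
    (∀ x y : ℝ,
      |deriv (fun l => dualFun ρ r c w1 w2 β C l) x
        - deriv (fun l => dualFun ρ r c w1 w2 β C l) y|
        ≤ (β + M ^ 2 * K ^ 2 / β) * |x - y|) := by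
  have hv : ∀ z a, 0 ≤ w2 z * c z a ∧ w2 z * c z a ≤ M * K := by
    intro z a
    obtain ⟨hc0, hcM⟩ := hc_bound z a
    exact ⟨mul_nonneg (hw2 z) hc0,
      by nlinarith [hw2 z, hw2_bound z]⟩
  -- first derivative
  have hd1 : deriv (fun l => dualFun ρ r c w1 w2 β C l) = fun lam => D1 ρ r c w1 w2 β C lam := by
    funext lam; exact (hasDerivAt_dual ρ r c w1 w2 β C lam).deriv
  -- second derivative
  have hd2 : deriv (deriv (fun l => dualFun ρ r c w1 w2 β C l))
      = fun lam => D2 ρ r c w1 w2 β lam := by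
    rw [hd1]; funext lam; exact (hasDerivAt_D1 ρ r c w1 w2 β C lam).deriv
  -- D2 bounds
  have hD2lb : ∀ lam, β ≤ D2 ρ r c w1 w2 β lam := by
    intro lam
    have : 0 ≤ β * ∑ z, ρ z * ((Q2 r c w1 w2 β lam z * Qpart r c w1 w2 β lam z
        - (Q1 r c w1 w2 β lam z) ^ 2) / (Qpart r c w1 w2 β lam z) ^ 2) := by
      apply mul_nonneg (le_of_lt hβ)
      apply Finset.sum_nonneg
      intro z _
      exact mul_nonneg (le_of_lt (hρ_pos z))
        (ratio_bounds r c w1 w2 β lam hβ z M K (hv z)).1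
    unfold D2; linarith
  have hD2ub : ∀ lam, D2 ρ r c w1 w2 β lam ≤ β + M ^ 2 * K ^ 2 / β := by
    intro lam
    have hsum : ∑ z, ρ z * ((Q2 r c w1 w2 β lam z * Qpart r c w1 w2 β lam z
        - (Q1 r c w1 w2 β lam z) ^ 2) / (Qpart r c w1 w2 β lam z) ^ 2)
        ≤ ∑ z, ρ z * (M * K / β) ^ 2 := by
      apply Finset.sum_le_sum
      intro z _
      exact mul_le_mul_of_nonneg_left
        (ratio_bounds r c w1 w2 β lam hβ z M K (hv z)).2 (le_of_lt (hρ_pos z))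
    have h1 : ∑ z, ρ z * (M * K / β) ^ 2 = (M * K / β) ^ 2 := by
      rw [← Finset.sum_mul, hρ_sum, one_mul]
    have h2 : β * (M * K / β) ^ 2 = M ^ 2 * K ^ 2 / β := by
      field_simp
    unfold D2
    nlinarith [mul_le_mul_of_nonneg_left (hsum.trans_eq h1) (le_of_lt hβ)]
  refine ⟨fun lam => by rw [hd2]; exact ⟨hD2lb lam, hD2ub lam⟩, ?_, ?_⟩
  · -- strong convexity
    rw [strongConvexOn_iff_convex]
    have hg : (fun x : ℝ => dualFun ρ r c w1 w2 β C x - β / 2 * ‖x‖ ^ 2)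
        = fun x => dualFun ρ r c w1 w2 β C x - β / 2 * x ^ 2 := by
      funext x; rw [Real.norm_eq_abs, sq_abs]
    rw [hg]
    have hgd : ∀ x : ℝ, HasDerivAt (fun x => dualFun ρ r c w1 w2 β C x - β / 2 * x ^ 2)
        (D1 ρ r c w1 w2 β C x - β * x) x := by
      intro x
      have h2 : HasDerivAt (fun x : ℝ => β / 2 * x ^ 2) (β * x) x := by
        have := (hasDerivAt_pow 2 x).const_mul (β / 2)
        refine this.congr_deriv ?_; push_cast; ring
      exact (hasDerivAt_dual ρ r c w1 w2 β C x).sub h2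
    have hgderiv : deriv (fun x => dualFun ρ r c w1 w2 β C x - β / 2 * x ^ 2)
        = fun x => D1 ρ r c w1 w2 β C x - β * x := by
      funext x; exact (hgd x).deriv
    have hgd2 : ∀ x : ℝ, HasDerivAt (fun x => D1 ρ r c w1 w2 β C x - β * x)
        (D2 ρ r c w1 w2 β x - β) x := by
      intro x
      exact (hasDerivAt_D1 ρ r c w1 w2 β C x).sub
        (by simpa using (hasDerivAt_id x).const_mul β)
    apply convexOn_univ_of_deriv2_nonneg
    · exact fun x => (hgd x).differentiableAt
    · rw [hgderiv]; exact fun x => (hgd2 x).differentiableAt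
    · intro x
      have : deriv^[2] (fun x => dualFun ρ r c w1 w2 β C x - β / 2 * x ^ 2) x
          = D2 ρ r c w1 w2 β x - β := by
        simp only [Function.iterate_succ, Function.iterate_zero, Function.comp_apply, id_eq]
        rw [hgderiv]; exact (hgd2 x).deriv
      rw [this]; linarith [hD2lb x]
  · -- Lipschitz
    intro x y
    rw [hd1]
    have hL : 0 ≤ β + M ^ 2 * K ^ 2 / β := by positivity
    have := Convex.norm_image_sub_le_of_norm_hasDerivWithin_le
      (f := fun lam => D1 ρ r c w1 w2 β C lam) (f' := fun lam => D2 ρ r c w1 w2 β lam)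
      (s := Set.univ) (C := β + M ^ 2 * K ^ 2 / β)
      (fun lam _ => (hasDerivAt_D1 ρ r c w1 w2 β C lam).hasDerivWithinAt)
      (fun lam _ => by
        rw [Real.norm_eq_abs, abs_of_pos (lt_of_lt_of_le hβ (hD2lb lam))]
        exact hD2ub lam)
      convex_univ (Set.mem_univ y) (Set.mem_univ x)
    simpa [Real.norm_eq_abs] using this
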